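/- If every vehicle in a platoon follows the same speed profile as a function of position, i.e., v_i(t) = v^s(s_i(t)) for a common positive function v^s, and vehicle i satisfies the time-gap spacing policy s_i(t) = s_{i-1}(t - τ_i) at some initial time t_0, then the time-gap policy s_i(t) = s_{i-1}(t - τ_i) holds for all t ≥ t_0. -/

import Mathlib

/-- If every vehicle follows the same positive continuous speed profile over space
and the time-gap policy holds at time `t₀`, then it holds for all `t ≥ t₀`. -/
theorem time_gap_policy_invariant
    (vs : ℝ → ℝ) (hcont : Continuous vs) (hpos : ∀ z, 0 < vs z)
    (sPrev sCur : ℝ → ℝ) (τ : ℝ) (hτ : 0 < τ)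
    (hPrev : ∀ t, HasDerivAt sPrev (vs (sPrev t)) t)
    (hCur : ∀ t, HasDerivAt sCur (vs (sCur t)) t)
    (t0 : ℝ) (hinit : sCur t0 = sPrev (t0 - τ)) :
    ∀ t ≥ t0, sCur t = sPrev (t - τ) := by
  -- F is the antiderivative of 1/vs
  set g : ℝ → ℝ := fun z => (vs z)⁻¹ with hg
  have hgcont : Continuous g := hcont.inv₀ (fun z => (hpos z).ne')
  set F : ℝ → ℝ := fun x => ∫ z in (0:ℝ)..x, g z with hF
  have hFder : ∀ x, HasDerivAt F (g x) x := by
    intro x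
    exact intervalIntegral.integral_hasDerivAt_right
      (hgcont.intervalIntegrable _ _)
      (hgcont.stronglyMeasurableAtFilter _ _)
      hgcont.continuousAt
  have hFmono : StrictMono F := by
    apply strictMono_of_deriv_pos
    intro x
    rw [(hFder x).deriv]
    exact inv_pos.mpr (hpos x)
  -- D has zero derivative
  have hD : ∀ t, HasDerivAt (fun t => F (sCur t) - F (sPrev (t - τ))) 0 t := by
    intro t
    have h1 : HasDerivAt (fun t => F (sCur t)) (g (sCur t) * vs (sCur t)) t :=
      (hFder (sCur t)).comp t (hCur t)
    have h2' : HasDerivAt (fun t : ℝ => sPrev (t - τ)) (vs (sPrev (t - τ)) * 1) t :=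
      (hPrev (t - τ)).comp t ((hasDerivAt_id t).sub_const τ)
    have h2 : HasDerivAt (fun t => F (sPrev (t - τ)))
        (g (sPrev (t - τ)) * (vs (sPrev (t - τ)) * 1)) t :=
      by have := (hFder (sPrev (t - τ))).comp t h2'; exact this
    have : HasDerivAt (fun t => F (sCur t) - F (sPrev (t - τ)))
        (g (sCur t) * vs (sCur t) - g (sPrev (t - τ)) * (vs (sPrev (t - τ)) * 1)) t := h1.sub h2
    convert this using 1
    simp only [hg, mul_one]
    rw [inv_mul_cancel₀ (hpos _).ne', inv_mul_cancel₀ (hpos _).ne', sub_self]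
  have hconst : ∀ t, F (sCur t) - F (sPrev (t - τ)) = F (sCur t0) - F (sPrev (t0 - τ)) := by
    intro t
    exact is_const_of_deriv_eq_zero (fun t => (hD t).differentiableAt)
      (fun t => (hD t).deriv) t t0
  intro t _
  have := hconst t
  rw [hinit, sub_self] at this
  exact hFmono.injective (by linarith)
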